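/- Let c_i be the carry bit at position i when adding two independent uniformly random n-bit integers x and α (with c_0 = 0). Then P(c_i = 1) = (2^i − 1)/2^(i+1) for all 0 ≤ i ≤ n−1. -/
import Mathlib


/-- The carry bit at position `i` when adding `a` and `x`. -/
def carry (a x : ℕ) : ℕ → Bool
  | 0 => false
  | i + 1 => ((x.testBit i && a.testBit i) ^^ (x.testBit i && carry a x i))
      ^^ (a.testBit i && carry a x i)

lemma carry_congr {a b x y : ℕ} (i : ℕ)
    (ha : ∀ j < i, a.testBit j = b.testBit j)
    (hx : ∀ j < i, x.testBit j = y.testBit j) :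
    carry a x i = carry b y i := by
  induction i with
  | zero => rfl
  | succ i ih =>
    have hc : carry a x i = carry b y i :=
      ih (fun j hj => ha j (hj.trans (Nat.lt_succ_self i)))
        (fun j hj => hx j (hj.trans (Nat.lt_succ_self i)))
    simp [carry, ha i (Nat.lt_succ_self i), hx i (Nat.lt_succ_self i), hc]

lemma carry_mod (a x i : ℕ) : carry (a % 2^i) (x % 2^i) i = carry a x i := by
  refine carry_congr i ?_ ?_ <;> intro j hj <;>
    simp [Nat.testBit_mod_two_pow, hj]

lemma sum_range_add' (f : ℕ → ℕ) (a b : ℕ) :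
    ∑ x ∈ Finset.range (a + b), f x
      = ∑ x ∈ Finset.range a, f x + ∑ x ∈ Finset.range b, f (a + x) := by
  induction b with
  | zero => simp
  | succ b ih =>
    rw [Nat.add_succ, Finset.sum_range_succ, ih, Finset.sum_range_succ, add_assoc]

lemma sum_range_mul_mod (f : ℕ → ℕ) (a k : ℕ) :
    ∑ x ∈ Finset.range (k * a), f (x % a) = k * ∑ x ∈ Finset.range a, f x := by
  induction k with
  | zero => simp
  | succ k ih =>
    rw [Nat.succ_mul, sum_range_add' (fun x => f (x % a)), ih]
    have h1 : ∀ x ∈ Finset.range a, f ((k * a + x) % a) = f x := by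
      intro x hx
      rw [Finset.mem_range] at hx
      rw [add_comm, Nat.add_mul_mod_self_right, Nat.mod_eq_of_lt hx]
    rw [Finset.sum_congr rfl h1, Nat.succ_mul]

/-- The count of pairs over `range (2^i) ×ˢ range (2^i)` with carry at `i`. -/
def F (i : ℕ) : ℕ :=
  ∑ x ∈ Finset.range (2^i), ∑ a ∈ Finset.range (2^i), (if carry a x i then 1 else 0)

lemma testBit_high {x i : ℕ} (hx : x < 2^i) : (2^i + x).testBit i = true := by
  rw [Nat.testBit_two_pow_add_eq, Nat.testBit_eq_false_of_lt hx]; rfl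

lemma carry_shift_left {a x i : ℕ} : carry (2^i + a) x i = carry a x i :=
  carry_congr i (fun j hj => Nat.testBit_two_pow_add_gt hj a) (fun _ _ => rfl)

lemma carry_shift_right {a x i : ℕ} : carry a (2^i + x) i = carry a x i :=
  carry_congr i (fun _ _ => rfl) (fun j hj => Nat.testBit_two_pow_add_gt hj x)

lemma F_succ (i : ℕ) : F (i + 1) = 2^i * 2^i + 2 * F i := by
  have hsplit : (2:ℕ)^(i+1) = 2^i + 2^i := by ring
  have key1 : ∀ x < 2^i,
      (∑ a ∈ Finset.range (2^i + 2^i), (if carry a x (i+1) then 1 else 0) : ℕ)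
        = ∑ a ∈ Finset.range (2^i), (if carry a x i then 1 else 0) := by
    intro x hx
    rw [sum_range_add']
    have e1 : ∀ a ∈ Finset.range (2^i), (if carry a x (i+1) then (1:ℕ) else 0) = 0 := by
      intro a ha; rw [Finset.mem_range] at ha
      simp [carry, Nat.testBit_eq_false_of_lt hx, Nat.testBit_eq_false_of_lt ha]
    have e2 : ∀ a ∈ Finset.range (2^i), (if carry (2^i + a) x (i+1) then (1:ℕ) else 0)
        = (if carry a x i then 1 else 0) := by
      intro a ha; rw [Finset.mem_range] at ha
      simp [carry, Nat.testBit_eq_false_of_lt hx, testBit_high ha, carry_shift_left]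
    rw [Finset.sum_congr rfl e1, Finset.sum_congr rfl e2]
    simp
  have key2 : ∀ x < 2^i,
      (∑ a ∈ Finset.range (2^i + 2^i), (if carry a (2^i + x) (i+1) then 1 else 0) : ℕ)
        = (∑ a ∈ Finset.range (2^i), (if carry a x i then 1 else 0)) + 2^i := by
    intro x hx
    rw [sum_range_add']
    have e1 : ∀ a ∈ Finset.range (2^i), (if carry a (2^i + x) (i+1) then (1:ℕ) else 0)
        = (if carry a x i then 1 else 0) := by
      intro a ha; rw [Finset.mem_range] at ha
      simp [carry, Nat.testBit_eq_false_of_lt ha, testBit_high hx, carry_shift_right]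
    have e2 : ∀ a ∈ Finset.range (2^i),
        (if carry (2^i + a) (2^i + x) (i+1) then (1:ℕ) else 0) = 1 := by
      intro a ha; rw [Finset.mem_range] at ha
      have hcc : carry (2^i + a) (2^i + x) i = carry a x i := by
        rw [carry_shift_left, carry_shift_right]
      simp only [carry, testBit_high hx, testBit_high ha, hcc, Bool.true_and]
      cases carry a x i <;> simp
    rw [Finset.sum_congr rfl e1, Finset.sum_congr rfl e2]
    simp
  unfold F
  rw [hsplit, sum_range_add']
  have h1 := Finset.sum_congr rfl (fun x hx => key1 x (Finset.mem_range.mp hx))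
  have h2 := Finset.sum_congr rfl (fun x hx => key2 x (Finset.mem_range.mp hx))
  rw [h1, h2, Finset.sum_add_distrib]
  simp only [Finset.sum_const, Finset.card_range, smul_eq_mul, mul_one]
  ring

lemma F_val (i : ℕ) : 2 * F i + 2^i = 2^(2*i) := by
  induction i with
  | zero => simp [F, carry]
  | succ i ih =>
    rw [F_succ]
    have h4 : (2:ℕ)^(2*(i+1)) = 2 * (2 * 2^(2*i)) := by ring
    rw [h4, ← ih]
    have h2 : (2:ℕ)^i * 2^i = 2^(2*i) := by ring
    rw [h2, ← ih]
    ring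

theorem stmt_13 (n : ℕ) (hn : 1 ≤ n) (i : ℕ) (hi : i ≤ n - 1) :
    ((((Finset.range (2^n)) ×ˢ (Finset.range (2^n))).filter
        (fun p => carry p.2 p.1 i = true)).card : ℚ) / ((2^n) * (2^n)) =
      (2^i - 1) / 2^(i+1) := by
  have hin : i ≤ n := le_trans hi (Nat.sub_le n 1)
  obtain ⟨m, rfl⟩ : ∃ m, n = m + i := ⟨n - i, (Nat.sub_add_cancel hin).symm⟩
  have hpow : (2:ℕ)^(m+i) = 2^m * 2^i := pow_add 2 m i
  have hcard : ((Finset.range (2^(m+i)) ×ˢ Finset.range (2^(m+i))).filter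
      (fun p => carry p.2 p.1 i = true)).card = 2^m * (2^m * F i) := by
    rw [Finset.card_filter, Finset.sum_product]
    calc ∑ x ∈ Finset.range (2^(m+i)), ∑ a ∈ Finset.range (2^(m+i)),
          (if carry a x i = true then 1 else 0)
        = ∑ x ∈ Finset.range (2^m * 2^i), ∑ a ∈ Finset.range (2^m * 2^i),
          (if carry (a % 2^i) (x % 2^i) i = true then 1 else 0) := by
          rw [← hpow]
          exact Finset.sum_congr rfl fun x _ => Finset.sum_congr rfl fun a _ => by
            rw [carry_mod]
      _ = ∑ x ∈ Finset.range (2^m * 2^i), 2^m * ∑ a ∈ Finset.range (2^i),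
          (if carry a (x % 2^i) i = true then 1 else 0) :=
          Finset.sum_congr rfl fun x _ =>
            sum_range_mul_mod (fun a => if carry a (x % 2^i) i = true then 1 else 0)
              (2^i) (2^m)
      _ = 2^m * ∑ x ∈ Finset.range (2^i), 2^m * ∑ a ∈ Finset.range (2^i),
          (if carry a x i = true then 1 else 0) :=
          sum_range_mul_mod (fun x => 2^m * ∑ a ∈ Finset.range (2^i),
            (if carry a x i = true then 1 else 0)) (2^i) (2^m)
      _ = 2^m * (2^m * F i) := by rw [← Finset.mul_sum]; rfl
  rw [hcard]
  have hFq : (F i : ℚ) = (2^(2*i) - 2^i) / 2 := by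
    have h := F_val i
    have h' : ((2 * F i + 2^i : ℕ) : ℚ) = ((2^(2*i) : ℕ) : ℚ) := by exact_mod_cast h
    push_cast at h'
    linarith
  push_cast [hFq, pow_add]
  have h1 : (2:ℚ)^m ≠ 0 := by positivity
  have h2 : (2:ℚ)^i ≠ 0 := by positivity
  field_simp
  ring
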